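/- Let S : ℝ → ℝ → ℝ satisfy the additivity property S λ₁ λ₀ = S λ₁ λ + S λ λ₀ for all real λ₀, λ, λ₁, and suppose that for every λ ∈ ℝ the function λ' ↦ S λ' λ is differentiable at λ' = λ with derivative L λ, where L : ℝ → ℝ is continuous. Then for all λ₀, λ ∈ ℝ, one has S λ λ₀ = ∫_{λ₀}^{λ} L(λ') dλ'. -/
import Mathlib

open intervalIntegral

/-- **Form of the Phase Functional** (Appendix A of the paper).
If the phase functional `S l' l` is additive over concatenation of parameter
intervals, and for each `l` the map `l' ↦ S l' l` has derivative `L l` at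
`l' = l`, with `L` continuous, then `S l l₀ = ∫_{l₀}^{l} L`. -/
theorem phase_functional_eq_integral
    (S : ℝ → ℝ → ℝ) (L : ℝ → ℝ)
    (hadd : ∀ l₀ l l₁ : ℝ, S l₁ l₀ = S l₁ l + S l l₀)
    (hdiff : ∀ l : ℝ, HasDerivAt (fun l' => S l' l) (L l) l)
    (hL : Continuous L) :
    ∀ (l₀ l : ℝ), S l l₀ = ∫ l' in l₀..l, L l' := by
  intro l₀ l
  have hzero : ∀ a : ℝ, S a a = 0 := by
    intro a
    have := hadd a a a
    linarith
  have hf : ∀ x : ℝ, HasDerivAt (fun l' => S l' l₀) (L x) x := by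
    intro x
    have h1 : (fun l' => S l' l₀) = fun l' => S l' x + S x l₀ := by
      funext l'; exact hadd l₀ x l'
    rw [h1]
    simpa using (hdiff x).add_const (S x l₀)
  have := intervalIntegral.integral_eq_sub_of_hasDerivAt
    (f := fun l' => S l' l₀) (f' := L) (a := l₀) (b := l)
    (fun x _ => hf x) (hL.intervalIntegrable l₀ l)
  rw [this]; simp [hzero]
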